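/- Fix an integer d ≥ 1 and let f ∈ L¹(ℝ^d) be nonnegative with unit mass such that ∫_{ℝ^d} f(v) |log(f(v)/M(v))| dv < ∞. For 0 < δ < 1 set f_δ = (1-δ) f + δ M. Then H(f|M) ≤ H(f_δ|M)/(1-δ) + (δ/(1-δ)) · ( log(1/δ) − ((1-δ)/δ) log(1-δ) ). -/

import Mathlib

open MeasureTheory Real
open scoped ENNReal RealInnerProductSpace

noncomputable section

abbrev Rd (d : ℕ) := EuclideanSpace ℝ (Fin d)

/-- The normalized Maxwellian `M(v) = (2π)^{-d/2} exp(-|v|²/2)`. -/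
def Maxw (d : ℕ) (v : Rd d) : ℝ := (2 * π) ^ (-(d : ℝ) / 2) * Real.exp (-‖v‖ ^ 2 / 2)

/-- The surface measure on the unit sphere of `ℝ^d`. -/
def sphereMeas (d : ℕ) : Measure (Metric.sphere (0 : Rd d) 1) :=
  (volume : Measure (Rd d)).toSphere

/-- post-collisional velocity `v' = (v+v_*)/2 + (|v-v_*|/2)σ`. -/
def vpr (d : ℕ) (v vs σ : Rd d) : Rd d := (2 : ℝ)⁻¹ • (v + vs) + (‖v - vs‖ / 2) • σ

/-- post-collisional velocity `v_*' = (v+v_*)/2 - (|v-v_*|/2)σ`. -/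
def vspr (d : ℕ) (v vs σ : Rd d) : Rd d := (2 : ℝ)⁻¹ • (v + vs) - (‖v - vs‖ / 2) • σ

/-- `cos θ = ((v-v_*)/|v-v_*|) · σ`. -/
def cosTheta (d : ℕ) (v vs σ : Rd d) : ℝ := ⟪‖v - vs‖⁻¹ • (v - vs), σ⟫

/-- The angular kernel: even, nonnegative, measurable, normalized on the sphere. -/
def IsAngKernel (d : ℕ) (b : ℝ → ℝ) : Prop :=
  Measurable b ∧ (∀ x, 0 ≤ b x) ∧ (∀ x, b (-x) = b x) ∧
    ∀ e : Rd d, ‖e‖ = 1 →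
      (∫ σ : Metric.sphere (0 : Rd d) 1, b ⟪e, (σ : Rd d)⟫ ∂(sphereMeas d)) = 1

/-- The collision frequency `Σ_α(v) = ∫ |v-v_*|^α M(v_*) dv_*`. -/
def collFreq (d : ℕ) (α : ℝ) (v : Rd d) : ℝ := ∫ vs : Rd d, ‖v - vs‖ ^ α * Maxw d vs

/-- The gain operator `K_α f(v)`. -/
def gainOp (d : ℕ) (b : ℝ → ℝ) (α : ℝ) (f : Rd d → ℝ) (v : Rd d) : ℝ :=
  ∫ vs : Rd d, ∫ σ : Metric.sphere (0 : Rd d) 1,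
    ‖v - vs‖ ^ α * b (cosTheta d v vs σ) * f (vpr d v vs σ) * Maxw d (vspr d v vs σ)
      ∂(sphereMeas d)

/-- The entropy production `D_α(f)`, as an element of `[0,∞]`. -/
def entProd (d : ℕ) (b : ℝ → ℝ) (α : ℝ) (f : Rd d → ℝ) : ℝ≥0∞ :=
  2⁻¹ * ∫⁻ v : Rd d, ∫⁻ vs : Rd d, ∫⁻ σ : Metric.sphere (0 : Rd d) 1,
    ENNReal.ofReal (‖v - vs‖ ^ α * b (cosTheta d v vs σ) * Maxw d v * Maxw d vs *
      ((f (vpr d v vs σ) / Maxw d (vpr d v vs σ) - f v / Maxw d v) *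
        Real.log ((f (vpr d v vs σ) / Maxw d (vpr d v vs σ)) / (f v / Maxw d v))))
      ∂(sphereMeas d)

/-- The relative entropy `H(f|M) = ∫ f log (f/M)`. -/
def relEnt (d : ℕ) (f : Rd d → ℝ) : ℝ := ∫ v : Rd d, f v * Real.log (f v / Maxw d v)

/-- `⟨v⟩ = (1+|v|²)^{1/2}`. -/
def jap (d : ℕ) (v : Rd d) : ℝ := Real.sqrt (1 + ‖v‖ ^ 2)

/-- A solution of the linear Boltzmann equation with initial datum `f₀`. -/
def IsSolution (d : ℕ) (b : ℝ → ℝ) (γ : ℝ) (f : ℝ → Rd d → ℝ) (f₀ : Rd d → ℝ) : Prop :=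
  f 0 = f₀ ∧
  (∀ t : ℝ, 0 ≤ t → Integrable (f t) ∧ (∀ v, 0 ≤ f t v) ∧ (∫ v : Rd d, f t v) = 1) ∧
  ∀ᵐ v : Rd d, ∀ t : ℝ, 0 ≤ t →
    HasDerivWithinAt (fun s => f s v)
      (gainOp d b γ (f t) v - collFreq d γ v * f t v) (Set.Ici 0) t


lemma maxw_pos (d : ℕ) (v : Rd d) : 0 < Maxw d v := by
  unfold Maxw
  positivity

lemma maxw_continuous (d : ℕ) : Continuous (Maxw d) := by
  unfold Maxw
  fun_prop

lemma rexp_norm_integrable (d : ℕ) :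
    Integrable (fun v : Rd d => Real.exp (-‖v‖ ^ 2 / 2)) := by
  have h := (GaussianFourier.integrable_cexp_neg_mul_sq_norm_add
    (V := Rd d) (b := (2:ℂ)⁻¹) (by norm_num) 0 0).norm
  convert h using 2 with v
  simp [Complex.norm_exp, Complex.ofReal_pow]
  ring_nf
  rw [← Complex.ofReal_pow, Complex.ofReal_re]

lemma maxw_integrable (d : ℕ) : Integrable (Maxw d) :=
  ((rexp_norm_integrable d).const_mul _)

lemma maxw_integral (d : ℕ) : ∫ v : Rd d, Maxw d v = 1 := by
  unfold Maxw
  rw [integral_const_mul]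
  have h := GaussianFourier.integral_rexp_neg_mul_sq_norm (V := Rd d) (b := 2⁻¹) (by norm_num)
  simp only [finrank_euclideanSpace_fin] at h
  have h2 : ∀ v : Rd d, -‖v‖^2/2 = -(2⁻¹) * ‖v‖^2 := fun v => by ring
  simp_rw [h2, h]
  have : (π / 2⁻¹ : ℝ) = 2 * π := by ring
  rw [this, ← Real.rpow_add (by positivity)]
  rw [neg_div, neg_add_cancel, Real.rpow_zero]

lemma xlogx_superadd {a b m : ℝ} (ha : 0 ≤ a) (hb : 0 ≤ b) (hm : 0 < m) :
    a * Real.log (a / m) + b * Real.log (b / m) ≤ (a + b) * Real.log ((a + b) / m) := by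
  rcases eq_or_lt_of_le ha with h | h
  · simp [← h]
  rcases eq_or_lt_of_le hb with h' | h'
  · simp [← h']
  have h1 : a * Real.log (a / m) ≤ a * Real.log ((a + b) / m) :=
    mul_le_mul_of_nonneg_left
      (Real.log_le_log (by positivity) ((div_le_div_iff_of_pos_right hm).mpr (by linarith))) ha
  have h2 : b * Real.log (b / m) ≤ b * Real.log ((a + b) / m) :=
    mul_le_mul_of_nonneg_left
      (Real.log_le_log (by positivity) ((div_le_div_iff_of_pos_right hm).mpr (by linarith))) hb
  nlinarith [h1, h2]

lemma xlogx_convex_bound {u δ : ℝ} (hu : 0 ≤ u) (hδ0 : 0 < δ) (hδ1 : δ < 1) :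
    ((1 - δ) * u + δ) * Real.log ((1 - δ) * u + δ) ≤ (1 - δ) * (u * Real.log u) := by
  have h := Real.convexOn_mul_log.2 (Set.mem_Ici.2 hu) (Set.mem_Ici.2 zero_le_one)
    (by linarith : (0:ℝ) ≤ 1 - δ) hδ0.le (by ring)
  simpa using h

/-- comparison of the relative entropies of `f` and of `f_δ = (1-δ)f + δM`. -/
theorem relative_entropy_modification (d : ℕ) (hd : 1 ≤ d)
    (f : Rd d → ℝ) (hfint : Integrable f) (hfnn : ∀ v, 0 ≤ f v)
    (hmass : (∫ v : Rd d, f v) = 1)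
    (hent : Integrable (fun v : Rd d => f v * Real.log (f v / Maxw d v)))
    (δ : ℝ) (hδ0 : 0 < δ) (hδ1 : δ < 1) :
    relEnt d f ≤ relEnt d (fun v => (1 - δ) * f v + δ * Maxw d v) / (1 - δ)
      + δ / (1 - δ) * (Real.log (1 / δ) - (1 - δ) / δ * Real.log (1 - δ)) := by
  have h1δ : (0:ℝ) < 1 - δ := by linarith
  set g : Rd d → ℝ := fun v => f v * Real.log (f v / Maxw d v) with hg
  set φ : Rd d → ℝ := fun v => ((1 - δ) * f v + δ * Maxw d v) *
      Real.log (((1 - δ) * f v + δ * Maxw d v) / Maxw d v) with hφ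
  set low : Rd d → ℝ := fun v =>
      (1 - δ) * g v + Real.log (1 - δ) * ((1 - δ) * f v) + (δ * Real.log δ) * Maxw d v with hlow
  have hlb : ∀ v, low v ≤ φ v := by
    intro v
    have hM := maxw_pos d v
    have key := xlogx_superadd (a := (1 - δ) * f v) (b := δ * Maxw d v) (m := Maxw d v)
      (by have := hfnn v; positivity) (by positivity) hM
    have e1 : ((1 - δ) * f v) * Real.log (((1 - δ) * f v) / Maxw d v)
        = (1 - δ) * g v + Real.log (1 - δ) * ((1 - δ) * f v) := by
      rcases eq_or_lt_of_le (hfnn v) with h0 | h0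
      · simp [hg, ← h0]
      · rw [hg, show ((1 - δ) * f v) / Maxw d v = (1 - δ) * (f v / Maxw d v) by ring,
          Real.log_mul (by positivity) (by positivity)]
        ring
    have e2 : (δ * Maxw d v) * Real.log ((δ * Maxw d v) / Maxw d v)
        = (δ * Real.log δ) * Maxw d v := by
      rw [mul_div_assoc, div_self hM.ne', mul_one]; ring
    rw [e1, e2] at key
    simpa [hlow, hφ] using key
  have hub : ∀ v, φ v ≤ (1 - δ) * g v := by
    intro v
    have hM := maxw_pos d v
    have hu : 0 ≤ f v / Maxw d v := by have := hfnn v; positivity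
    have h := xlogx_convex_bound hu hδ0 hδ1
    have e : ((1 - δ) * f v + δ * Maxw d v) / Maxw d v = (1 - δ) * (f v / Maxw d v) + δ := by
      field_simp
    calc φ v = Maxw d v * (((1 - δ) * (f v / Maxw d v) + δ) *
          Real.log ((1 - δ) * (f v / Maxw d v) + δ)) := by
          rw [hφ]; simp only []; rw [e]
          field_simp
      _ ≤ Maxw d v * ((1 - δ) * ((f v / Maxw d v) * Real.log (f v / Maxw d v))) :=
          mul_le_mul_of_nonneg_left h hM.le
      _ = (1 - δ) * g v := by rw [hg]; field_simp
  have hMint := maxw_integrable d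
  have hlow_int : Integrable low :=
    ((hent.const_mul _).add ((hfint.const_mul _).const_mul _)).add (hMint.const_mul _)
  have hup_int : Integrable (fun v => (1 - δ) * g v) := hent.const_mul _
  have hφ_meas : AEStronglyMeasurable φ volume := by
    have hf := hfint.aestronglyMeasurable
    have hMm : AEStronglyMeasurable (Maxw d) (volume : Measure (Rd d)) := (maxw_continuous d).aestronglyMeasurable
    apply AEStronglyMeasurable.mul
    · exact (hf.const_mul _).add (hMm.const_mul _)
    · apply (Real.measurable_log.comp_aemeasurable ?_).aestronglyMeasurable
      exact ((hf.aemeasurable.const_mul _).add (hMm.aemeasurable.const_mul _)).div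
        hMm.aemeasurable
  have hφ_int : Integrable φ := by
    apply Integrable.mono' (hlow_int.abs.add hup_int.abs) hφ_meas
    filter_upwards with v
    rw [Real.norm_eq_abs, abs_le]
    refine ⟨?_, ?_⟩
    · have h1 := hlb v; have h2 := neg_abs_le (low v)
      have h3 := le_abs_self ((1 - δ) * g v); have h4 := abs_nonneg ((1 - δ) * g v)
      simp only [Pi.add_apply, Pi.abs_apply]
      linarith
    · have h1 := hub v; have h2 := le_abs_self ((1 - δ) * g v)
      have h3 := abs_nonneg (low v)
      simp only [Pi.add_apply, Pi.abs_apply]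
      linarith
  have hint : ∫ v, low v ≤ ∫ v, φ v := integral_mono hlow_int hφ_int hlb
  have hgint : ∫ v, g v = relEnt d f := rfl
  have i1 : Integrable (fun v : Rd d => (1 - δ) * g v) := hent.const_mul _
  have i2 : Integrable (fun v : Rd d => Real.log (1 - δ) * ((1 - δ) * f v)) :=
    (hfint.const_mul _).const_mul _
  have i3 : Integrable (fun v : Rd d => (δ * Real.log δ) * Maxw d v) := hMint.const_mul _
  have i12 : Integrable (fun v : Rd d => (1 - δ) * g v + Real.log (1 - δ) * ((1 - δ) * f v)) :=
    i1.add i2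
  have hlowval : ∫ v, low v
      = (1 - δ) * relEnt d f + Real.log (1 - δ) * (1 - δ) + δ * Real.log δ := by
    have e0 : (∫ v, low v) = ∫ v, (((1 - δ) * g v + Real.log (1 - δ) * ((1 - δ) * f v))
        + (δ * Real.log δ) * Maxw d v) := rfl
    rw [e0, integral_add i12 i3, integral_add i1 i2]
    simp only [integral_const_mul, hmass, maxw_integral, hgint]
    ring
  have hφval : ∫ v, φ v = relEnt d (fun v => (1 - δ) * f v + δ * Maxw d v) := rfl
  have key : (1 - δ) * relEnt d f + Real.log (1 - δ) * (1 - δ) + δ * Real.log δ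
      ≤ relEnt d (fun v => (1 - δ) * f v + δ * Maxw d v) := by
    rw [← hlowval, ← hφval]; exact hint
  rw [one_div, Real.log_inv]
  have heq : δ / (1 - δ) * (-Real.log δ - (1 - δ) / δ * Real.log (1 - δ))
      = (-(δ * Real.log δ) - (1 - δ) * Real.log (1 - δ)) / (1 - δ) := by
    field_simp
  rw [heq, ← add_div, le_div_iff₀ h1δ]
  nlinarith [key]
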